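/- (Eckart–Young lower bound for rank-one approximation, Frobenius norm.) For every real matrix M ∈ ℝ^{m×n} and all vectors c ∈ ℝ^m, d ∈ ℝ^n, ‖M − c dᵀ‖_F² ≥ ‖M‖_F² − ‖M‖₂². -/

import Mathlib

open Matrix

/-- Frobenius norm of a real matrix. -/
noncomputable def frobNorm {m n : ℕ} (A : Matrix (Fin m) (Fin n) ℝ) : ℝ :=
  Real.sqrt (∑ i, ∑ j, (A i j) ^ 2)

/-- Euclidean norm of a real vector. -/
noncomputable def euclNorm {n : ℕ} (x : Fin n → ℝ) : ℝ :=
  Real.sqrt (∑ i, (x i) ^ 2)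

/-- The ℓ²→ℓ² operator norm (spectral norm, largest singular value):
`‖A‖₂ = sup_{x ≠ 0} ‖A x‖₂ / ‖x‖₂`. -/
noncomputable def specNorm {m n : ℕ} (A : Matrix (Fin m) (Fin n) ℝ) : ℝ :=
  sSup {t : ℝ | ∃ x : Fin n → ℝ, x ≠ 0 ∧ t = euclNorm (A.mulVec x) / euclNorm x}

lemma euclNorm_nonneg {n : ℕ} (x : Fin n → ℝ) : 0 ≤ euclNorm x :=
  Real.sqrt_nonneg _

lemma euclNorm_sq {n : ℕ} (x : Fin n → ℝ) : euclNorm x ^ 2 = ∑ i, x i ^ 2 :=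
  Real.sq_sqrt (Finset.sum_nonneg fun i _ => sq_nonneg _)

lemma frobNorm_sq {m n : ℕ} (A : Matrix (Fin m) (Fin n) ℝ) :
    frobNorm A ^ 2 = ∑ i, ∑ j, A i j ^ 2 :=
  Real.sq_sqrt (Finset.sum_nonneg fun i _ =>
    Finset.sum_nonneg fun j _ => sq_nonneg _)

lemma euclNorm_pos {n : ℕ} {x : Fin n → ℝ} (hx : x ≠ 0) : 0 < euclNorm x := by
  apply Real.sqrt_pos.2
  obtain ⟨i, hi⟩ := Function.ne_iff.1 hx
  simp only [Pi.zero_apply] at hi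
  exact Finset.sum_pos' (fun j _ => sq_nonneg _)
    ⟨i, Finset.mem_univ i, by positivity⟩

lemma mulVec_norm_le {m n : ℕ} (A : Matrix (Fin m) (Fin n) ℝ) (x : Fin n → ℝ) :
    euclNorm (A.mulVec x) ≤ frobNorm A * euclNorm x := by
  rw [euclNorm, frobNorm, euclNorm, ← Real.sqrt_mul (x := ∑ i, ∑ j, A i j ^ 2)
    (Finset.sum_nonneg fun i _ => Finset.sum_nonneg fun j _ => sq_nonneg _)]
  apply Real.sqrt_le_sqrt
  rw [Finset.sum_mul]
  apply Finset.sum_le_sum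
  intro i _
  calc (A.mulVec x i) ^ 2 = (∑ j, A i j * x j) ^ 2 := by rfl
    _ ≤ (∑ j, (A i j) ^ 2) * ∑ j, (x j) ^ 2 :=
      Finset.sum_mul_sq_le_sq_mul_sq Finset.univ _ _

lemma mulVec_le_spec {m n : ℕ} (A : Matrix (Fin m) (Fin n) ℝ) {x : Fin n → ℝ}
    (hx : x ≠ 0) : euclNorm (A.mulVec x) ≤ specNorm A * euclNorm x := by
  have hxp := euclNorm_pos hx
  rw [mul_comm, ← div_le_iff₀' hxp]
  apply le_csSup
  · refine ⟨frobNorm A, ?_⟩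
    rintro t ⟨y, hy, rfl⟩
    rw [div_le_iff₀ (euclNorm_pos hy)]
    exact mulVec_norm_le A y
  · exact ⟨x, hx, by rw [div_eq_div_iff hxp.ne' hxp.ne']⟩

/-- Eckart–Young lower bound for rank-one Frobenius approximation:
`‖M − c dᵀ‖_F² ≥ ‖M‖_F² − ‖M‖₂²`. -/
theorem eckart_young_rank_one_lower_bound {m n : ℕ} (M : Matrix (Fin m) (Fin n) ℝ)
    (c : Fin m → ℝ) (d : Fin n → ℝ) :
    (frobNorm M) ^ 2 - (specNorm M) ^ 2 ≤
      (frobNorm (M - Matrix.vecMulVec c d)) ^ 2 := by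
  have expand : (frobNorm (M - Matrix.vecMulVec c d)) ^ 2 =
      (frobNorm M) ^ 2 - 2 * (∑ i, c i * (M.mulVec d i))
        + (∑ i, c i ^ 2) * (∑ j, d j ^ 2) := by
    rw [frobNorm_sq, frobNorm_sq, Finset.sum_mul_sum, Finset.mul_sum,
      ← Finset.sum_sub_distrib, ← Finset.sum_add_distrib]
    apply Finset.sum_congr rfl
    intro i _
    rw [Matrix.mulVec, dotProduct, Finset.mul_sum, Finset.mul_sum,
      ← Finset.sum_sub_distrib, ← Finset.sum_add_distrib]
    apply Finset.sum_congr rfl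
    intro j _
    simp [Matrix.sub_apply, Matrix.vecMulVec_apply]
    ring
  rw [expand]
  have key : 2 * (∑ i, c i * (M.mulVec d i)) ≤
      (specNorm M) ^ 2 + (∑ i, c i ^ 2) * (∑ j, d j ^ 2) := by
    by_cases hd : d = 0
    · simp [hd, Matrix.mulVec_zero]
      positivity
    · have h1 : ∑ i, c i * (M.mulVec d i) ≤ euclNorm c * euclNorm (M.mulVec d) := by
        have := Finset.sum_mul_sq_le_sq_mul_sq (Finset.univ) c (M.mulVec d)
        calc ∑ i, c i * (M.mulVec d i)
            ≤ |∑ i, c i * (M.mulVec d i)| := le_abs_self _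
          _ = Real.sqrt ((∑ i, c i * (M.mulVec d i)) ^ 2) := (Real.sqrt_sq_eq_abs _).symm
          _ ≤ Real.sqrt ((∑ i, c i ^ 2) * (∑ i, (M.mulVec d i) ^ 2)) :=
              Real.sqrt_le_sqrt this
          _ = euclNorm c * euclNorm (M.mulVec d) := by
              rw [euclNorm, euclNorm, Real.sqrt_mul
                (Finset.sum_nonneg fun i _ => sq_nonneg _)]
      have h2 : euclNorm c * euclNorm (M.mulVec d) ≤
          euclNorm c * (specNorm M * euclNorm d) :=
        mul_le_mul_of_nonneg_left (mulVec_le_spec M hd) (euclNorm_nonneg c)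
      have h3 := two_mul_le_add_sq (specNorm M) (euclNorm c * euclNorm d)
      have h4 : (euclNorm c * euclNorm d) ^ 2 = (∑ i, c i ^ 2) * (∑ j, d j ^ 2) := by
        rw [mul_pow, euclNorm_sq, euclNorm_sq]
      nlinarith [h1, h2, h3, h4]
  linarith
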